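/- Let X be a real random variable, f : ℝ → [0,∞) a Borel measurable function, and α ∈ (0,1). Then ∫_0^α f(q_u(X)) du = E[f(X)·1{X < q_α(X)}] + f(q_α(X))·(α − P[X < q_α(X)]), where the left-hand side is the Lebesgue integral over u ∈ (0,α); if either side is infinite, so is the other. -/

import Mathlib

open MeasureTheory Set Filter Topology ENNReal

/-- The `α`-quantile of a real random variable `X`:
`q_α(X) = inf {x ∈ ℝ : P[X ≤ x] ≥ α}`. -/
noncomputable def quantile {Ω : Type*} [MeasurableSpace Ω] (μ : Measure Ω)
    (X : Ω → ℝ) (α : ℝ) : ℝ :=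
  sInf {x : ℝ | ENNReal.ofReal α ≤ μ {ω | X ω ≤ x}}

namespace QuantileAux

/-- The quantile of a measure on `ℝ` directly. -/
noncomputable def qr (ν : Measure ℝ) (u : ℝ) : ℝ :=
  sInf {x : ℝ | ENNReal.ofReal u ≤ ν (Iic x)}

variable {ν : Measure ℝ} [IsProbabilityMeasure ν]

lemma qs_nonempty {u : ℝ} (hu : u < 1) :
    {x : ℝ | ENNReal.ofReal u ≤ ν (Iic x)}.Nonempty := by
  have h1 : ENNReal.ofReal u < ν univ := by
    rw [measure_univ]; exact ENNReal.ofReal_lt_one.mpr hu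
  obtain ⟨x, hx⟩ := ((tendsto_measure_Iic_atTop ν).eventually (eventually_gt_nhds h1)).exists
  exact ⟨x, hx.le⟩

lemma qs_bddBelow {u : ℝ} (hu : 0 < u) :
    BddBelow {x : ℝ | ENNReal.ofReal u ≤ ν (Iic x)} := by
  have h0 : (0 : ℝ≥0∞) < ENNReal.ofReal u := ENNReal.ofReal_pos.mpr hu
  have hempty : (⋂ n : ℕ, Iic (-(n : ℝ))) = (∅ : Set ℝ) := by
    ext x
    simp only [mem_iInter, mem_Iic, mem_empty_iff_false, iff_false, not_forall, not_le]
    obtain ⟨n, hn⟩ := exists_nat_gt (-x)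
    exact ⟨n, by linarith⟩
  have htend : Tendsto (fun n : ℕ => ν (Iic (-(n : ℝ)))) atTop (𝓝 0) := by
    have := tendsto_measure_iInter_atTop (μ := ν) (s := fun n : ℕ => Iic (-(n : ℝ)))
      (fun n => measurableSet_Iic.nullMeasurableSet)
      (fun m n hmn => Iic_subset_Iic.mpr (neg_le_neg (Nat.cast_le.mpr hmn)))
      ⟨0, measure_ne_top ν _⟩
    rwa [hempty, measure_empty] at this
  obtain ⟨n, hn⟩ := (htend.eventually (eventually_lt_nhds h0)).exists
  refine ⟨-(n : ℝ), fun x hx => ?_⟩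
  by_contra h
  push_neg at h
  exact absurd (le_trans hx (measure_mono (Iic_subset_Iic.mpr h.le))) (not_le.mpr hn)

lemma qr_mem {u : ℝ} (hu : u ∈ Ioo (0:ℝ) 1) :
    ENNReal.ofReal u ≤ ν (Iic (qr ν u)) := by
  have hne := qs_nonempty (ν := ν) hu.2
  have key : ∀ n : ℕ, ENNReal.ofReal u ≤ ν (Iic (qr ν u + 1/(n+1))) := by
    intro n
    have hpos : (0:ℝ) < 1/((n:ℝ)+1) := by positivity
    obtain ⟨y, hy, hy2⟩ := exists_lt_of_csInf_lt hne
      (show sInf {x : ℝ | ENNReal.ofReal u ≤ ν (Iic x)} < qr ν u + 1/(n+1) by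
        unfold qr; linarith)
    exact le_trans hy (measure_mono (Iic_subset_Iic.mpr hy2.le))
  have hiInter : ⋂ n : ℕ, Iic (qr ν u + 1/(n+1)) = Iic (qr ν u) := by
    ext x
    simp only [mem_iInter, mem_Iic]
    constructor
    · intro h
      by_contra hx
      push_neg at hx
      obtain ⟨n, hn⟩ := exists_nat_one_div_lt (show (0:ℝ) < x - qr ν u by linarith)
      have := h n
      linarith
    · intro h n
      have : (0:ℝ) < 1/((n:ℝ)+1) := by positivity
      linarith
  have htend := tendsto_measure_iInter_atTop (μ := ν)
    (s := fun n : ℕ => Iic (qr ν u + 1/(n+1)))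
    (fun n => measurableSet_Iic.nullMeasurableSet)
    (fun m n hmn => Iic_subset_Iic.mpr (by
      have h1 : ((m:ℝ)+1) ≤ (n:ℝ)+1 := by
        have := Nat.cast_le (α := ℝ).mpr hmn; linarith
      have := one_div_le_one_div_of_le (show (0:ℝ) < (m:ℝ)+1 by positivity) h1
      linarith))
    ⟨0, measure_ne_top ν _⟩
  rw [hiInter] at htend
  exact ge_of_tendsto htend (Eventually.of_forall key)

lemma qr_le_iff {u : ℝ} (hu : u ∈ Ioo (0:ℝ) 1) (x : ℝ) :
    qr ν u ≤ x ↔ ENNReal.ofReal u ≤ ν (Iic x) := by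
  constructor
  · intro h
    exact le_trans (qr_mem hu) (measure_mono (Iic_subset_Iic.mpr h))
  · intro h
    exact csInf_le (qs_bddBelow hu.1) h

lemma qr_mono {u v : ℝ} (hu : 0 < u) (huv : u ≤ v) (hv : v < 1) : qr ν u ≤ qr ν v :=
  csInf_le_csInf (qs_bddBelow hu) (qs_nonempty hv)
    (fun _ hx => le_trans (ENNReal.ofReal_le_ofReal huv) hx)

lemma measure_Iio_qr_le {α : ℝ} (hα : α ∈ Ioo (0:ℝ) 1) :
    ν (Iio (qr ν α)) ≤ ENNReal.ofReal α := by
  have hU : (⋃ n : ℕ, Iic (qr ν α - 1/(n+1))) = Iio (qr ν α) := by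
    ext x
    simp only [mem_iUnion, mem_Iic, mem_Iio]
    constructor
    · rintro ⟨n, hn⟩
      have : (0:ℝ) < 1/((n:ℝ)+1) := by positivity
      linarith
    · intro h
      obtain ⟨n, hn⟩ := exists_nat_one_div_lt (show (0:ℝ) < qr ν α - x by linarith)
      exact ⟨n, by linarith⟩
  have hmono : Monotone (fun n : ℕ => Iic (qr ν α - 1/(n+1))) := by
    intro m n hmn
    apply Iic_subset_Iic.mpr
    have h1 : ((m:ℝ)+1) ≤ (n:ℝ)+1 := by
      have := Nat.cast_le (α := ℝ).mpr hmn; linarith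
    have := one_div_le_one_div_of_le (show (0:ℝ) < (m:ℝ)+1 by positivity) h1
    linarith
  rw [← hU, hmono.directed_le.measure_iUnion]
  refine iSup_le fun n => ?_
  by_contra hc
  push_neg at hc
  have h1 : qr ν α ≤ qr ν α - 1/(n+1) := (qr_le_iff hα _).mpr hc.le
  have : (0:ℝ) < 1/((n:ℝ)+1) := by positivity
  linarith

lemma map_eq {α : ℝ} (hα : α ∈ Ioo (0:ℝ) 1) :
    (volume.restrict (Ioo (0:ℝ) α)).map (qr ν)
      = ν.restrict (Iio (qr ν α))
        + (ENNReal.ofReal α - ν (Iio (qr ν α))) • Measure.dirac (qr ν α) := by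
  have hqm : AEMeasurable (qr ν) (volume.restrict (Ioo (0:ℝ) α)) :=
    aemeasurable_restrict_of_monotoneOn measurableSet_Ioo
      (fun u hu v hv huv => qr_mono hu.1 huv (hv.2.trans hα.2))
  haveI : IsFiniteMeasure ((volume.restrict (Ioo (0:ℝ) α)).map (qr ν)) := by
    constructor
    rw [Measure.map_apply_of_aemeasurable hqm MeasurableSet.univ]
    simp [Real.volume_Ioo]
  refine Measure.ext_of_Iic _ _ (fun t => ?_)
  rw [Measure.map_apply_of_aemeasurable hqm measurableSet_Iic,
    Measure.restrict_apply' measurableSet_Ioo,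
    Measure.add_apply, Measure.restrict_apply measurableSet_Iic, Measure.smul_apply,
    Measure.dirac_apply' _ measurableSet_Iic, smul_eq_mul]
  rcases lt_or_ge t (qr ν α) with ht | ht
  · have hlt : ν (Iic t) < ENNReal.ofReal α := by
      by_contra hc
      push_neg at hc
      exact absurd ((qr_le_iff hα t).mpr hc) (not_le.mpr ht)
    have hb : (ν (Iic t)).toReal < α := by
      have := (ENNReal.toReal_lt_toReal (measure_ne_top ν _) ENNReal.ofReal_ne_top).mpr hlt
      rwa [ENNReal.toReal_ofReal hα.1.le] at this
    have hset : qr ν ⁻¹' Iic t ∩ Ioo 0 α = Ioc 0 ((ν (Iic t)).toReal) := by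
      ext u
      simp only [mem_inter_iff, mem_preimage, mem_Iic, mem_Ioo, mem_Ioc]
      constructor
      · rintro ⟨h1, h2, h3⟩
        refine ⟨h2, ?_⟩
        have := (qr_le_iff (⟨h2, h3.trans hα.2⟩ : u ∈ Ioo (0:ℝ) 1) t).mp h1
        exact (ENNReal.ofReal_le_iff_le_toReal (measure_ne_top ν _)).mp this
      · rintro ⟨h1, h2⟩
        have hu1 : u < α := lt_of_le_of_lt h2 hb
        refine ⟨?_, h1, hu1⟩
        refine (qr_le_iff (⟨h1, hu1.trans hα.2⟩ : u ∈ Ioo (0:ℝ) 1) t).mpr ?_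
        calc ENNReal.ofReal u ≤ ENNReal.ofReal ((ν (Iic t)).toReal) :=
              ENNReal.ofReal_le_ofReal h2
          _ = ν (Iic t) := ENNReal.ofReal_toReal (measure_ne_top ν _)
    have hIic : Iic t ∩ Iio (qr ν α) = Iic t :=
      inter_eq_self_of_subset_left (fun x hx => lt_of_le_of_lt hx ht)
    have hnm : qr ν α ∉ Iic t := by simp only [mem_Iic, not_le]; exact ht
    rw [hset, Real.volume_Ioc, hIic, Set.indicator_of_notMem hnm, mul_zero, add_zero,
      sub_zero, ENNReal.ofReal_toReal (measure_ne_top ν _)]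
  · have hle : ENNReal.ofReal α ≤ ν (Iic t) := (qr_le_iff hα t).mp ht
    have hset : qr ν ⁻¹' Iic t ∩ Ioo 0 α = Ioo 0 α := by
      refine inter_eq_self_of_subset_right (fun u hu => ?_)
      have hu1 : u ∈ Ioo (0:ℝ) 1 := ⟨hu.1, hu.2.trans hα.2⟩
      exact (qr_le_iff hu1 t).mpr (le_trans (ENNReal.ofReal_le_ofReal hu.2.le) hle)
    have hIio : Iic t ∩ Iio (qr ν α) = Iio (qr ν α) :=
      inter_eq_self_of_subset_right (fun x hx => le_trans (le_of_lt hx) ht)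
    have hm : qr ν α ∈ Iic t := mem_Iic.mpr ht
    rw [hset, Real.volume_Ioo, hIio, Set.indicator_of_mem hm, Pi.one_apply, mul_one,
      sub_zero, add_tsub_cancel_of_le (measure_Iio_qr_le hα)]

end QuantileAux

/-- The strict-inequality variant:
`∫_0^α f(q_u(X)) du = E[f(X)·1{X < q_α(X)}] + f(q_α(X))·(α - P[X < q_α(X)])` for
non-negative Borel `f`, stated in `ℝ≥0∞` so that if either side is infinite,
so is the other. -/
theorem integral_quantile_eq_tail_expectation_lt {Ω : Type*} [MeasurableSpace Ω]
    (μ : Measure Ω) [IsProbabilityMeasure μ] (X : Ω → ℝ) (hX : Measurable X)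
    (f : ℝ → ℝ) (hf : Measurable f) (hf0 : ∀ x, 0 ≤ f x)
    (α : ℝ) (hα : α ∈ Set.Ioo (0 : ℝ) 1) :
    (∫⁻ u in Set.Ioo (0 : ℝ) α, ENNReal.ofReal (f (quantile μ X u)))
      = (∫⁻ ω in {ω | X ω < quantile μ X α}, ENNReal.ofReal (f (X ω)) ∂μ)
        + ENNReal.ofReal (f (quantile μ X α))
          * (ENNReal.ofReal α - μ {ω | X ω < quantile μ X α}) := by
  set ν := μ.map X with hν
  haveI : IsProbabilityMeasure ν := Measure.isProbabilityMeasure_map hX.aemeasurable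
  have hq : ∀ u, quantile μ X u = QuantileAux.qr ν u := by
    intro u
    unfold quantile QuantileAux.qr
    congr 1
    ext x
    simp only [Set.mem_setOf_eq]
    rw [hν, Measure.map_apply hX measurableSet_Iic]
    rfl
  have hmu_lt : μ {ω | X ω < QuantileAux.qr ν α} = ν (Iio (QuantileAux.qr ν α)) := by
    rw [hν, Measure.map_apply hX measurableSet_Iio]
    rfl
  simp only [hq, hmu_lt]
  have hg : Measurable (fun x => ENNReal.ofReal (f x)) := hf.ennreal_ofReal
  have hqm : AEMeasurable (QuantileAux.qr ν) (volume.restrict (Ioo (0:ℝ) α)) :=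
    aemeasurable_restrict_of_monotoneOn measurableSet_Ioo
      (fun u hu v hv huv => QuantileAux.qr_mono hu.1 huv (hv.2.trans hα.2))
  calc ∫⁻ u in Ioo (0:ℝ) α, ENNReal.ofReal (f (QuantileAux.qr ν u))
      = ∫⁻ x, ENNReal.ofReal (f x) ∂((volume.restrict (Ioo (0:ℝ) α)).map (QuantileAux.qr ν)) :=
        (lintegral_map' hg.aemeasurable hqm).symm
    _ = (∫⁻ x, ENNReal.ofReal (f x) ∂(ν.restrict (Iio (QuantileAux.qr ν α))))
          + (ENNReal.ofReal α - ν (Iio (QuantileAux.qr ν α)))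
            * ENNReal.ofReal (f (QuantileAux.qr ν α)) := by
        rw [QuantileAux.map_eq hα, lintegral_add_measure, lintegral_smul_measure,
          lintegral_dirac' _ hg, smul_eq_mul]
    _ = (∫⁻ ω in {ω | X ω < QuantileAux.qr ν α}, ENNReal.ofReal (f (X ω)) ∂μ)
          + ENNReal.ofReal (f (QuantileAux.qr ν α))
            * (ENNReal.ofReal α - ν (Iio (QuantileAux.qr ν α))) := by
        rw [mul_comm]
        congr 1
        rw [hν, setLIntegral_map measurableSet_Iio hg hX]
        rfl
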